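/- arXiv:1101.3064 — 3 statements merged into one kernel-verified Lean document; each statement's English description precedes it below -/
import Mathlib

section
/- (Nerve Theorem) Let E be a category with dense generator A, and T a monad with arities A (i.e. ν_A∘T sends the canonical A-cocones of E to colimit cocones in PSh(A)). Then the full subcategory Θ_T of E^T spanned by free T-algebras on objects of A is a dense generator of E^T, and the essential image of the nerve ν_T:E^T→PSh(Θ_T) consists exactly of those presheaves whose restriction along j_T:A→Θ_T lies in the essential image of ν_A:E→PSh(A). -/
open CategoryTheory CategoryTheory.Limits

universe v u

/-- The restricted Yoneda functor `ν_A`, with its meaning in the older Mathlib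
(no `ULift`). -/
def CategoryTheory.Presheaf.restrictedYoneda {C : Type v} [SmallCategory C] {ℰ : Type u}
    [Category.{v} ℰ] (A : C ⥤ ℰ) : ℰ ⥤ Cᵒᵖ ⥤ Type v :=
  yoneda ⋙ (Functor.whiskeringLeft _ _ (Type v)).obj (Functor.op A)

def canCocone {A : Type v} [SmallCategory A] {E : Type u} [Category.{v} E]
    (i : A ⥤ E) (X : E) : Cocone (CostructuredArrow.proj i X ⋙ i) where
  pt := X
  ι :=
    { app := fun f => f.hom
      naturality := fun f g m => (CostructuredArrow.w m).trans (Category.comp_id _).symm }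

variable {A : Type v} [SmallCategory A] {E : Type u} [Category.{v} E]

/-- `Θ_T`: the full subcategory of `E^T` spanned by free `T`-algebras on objects
of `A`, presented so that the restricted free algebra functor `j_T` is
bijective (indeed the identity) on objects. -/
def ThetaT (i : A ⥤ E) (T : Monad E) : Type v :=
  InducedCategory T.Algebra (fun a => T.free.obj (i.obj a))

instance (i : A ⥤ E) (T : Monad E) : Category.{v} (ThetaT i T) :=
  InducedCategory.instCategory

/-- The fully faithful inclusion `i_T : Θ_T ⥤ E^T`. -/
def iT (i : A ⥤ E) (T : Monad E) : ThetaT i T ⥤ T.Algebra :=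
  inducedFunctor _

/-- The restricted free algebra functor `j_T : A ⥤ Θ_T`, bijective on objects. -/
def jT (i : A ⥤ E) (T : Monad E) : A ⥤ ThetaT i T where
  obj a := a
  map f := InducedCategory.homMk (T.free.map (i.map f))
  map_id a := by
    refine InducedCategory.hom_ext ?_
    change T.free.map (i.map (𝟙 a)) = 𝟙 _
    simp
  map_comp f g := by
    refine InducedCategory.hom_ext ?_
    change T.free.map (i.map (f ≫ g)) = T.free.map (i.map f) ≫ T.free.map (i.map g)
    simp

set_option maxHeartbeats 1000000

namespace NerveAux

section Adjunction

variable {T : Monad E}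

/-- Transpose of an algebra map out of a free algebra. -/
def trans {Z : E} {W : T.Algebra} (g : T.free.obj Z ⟶ W) : Z ⟶ W.A :=
  T.η.app Z ≫ g.f

/-- The algebra map out of a free algebra corresponding to a map into the carrier. -/
def sharp {Z : E} {W : T.Algebra} (x : Z ⟶ W.A) : T.free.obj Z ⟶ W where
  f := T.map x ≫ W.a
  h := by
    show T.map (T.map x ≫ W.a) ≫ W.a = T.μ.app Z ≫ T.map x ≫ W.a
    rw [Functor.map_comp, Category.assoc, ← W.assoc, ← Category.assoc, ← Category.assoc]
    congr 1
    exact T.μ.naturality x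

@[simp] lemma trans_sharp {Z : E} {W : T.Algebra} (x : Z ⟶ W.A) : trans (sharp x) = x := by
  show T.η.app Z ≫ T.map x ≫ W.a = x
  rw [← Category.assoc, ← T.η.naturality x]
  simp [W.unit]

lemma map_trans_comp {Z : E} {W : T.Algebra} (g : T.free.obj Z ⟶ W) :
    T.map (trans g) ≫ W.a = g.f := by
  show T.map (T.η.app Z ≫ g.f) ≫ W.a = g.f
  erw [Functor.map_comp, Category.assoc, g.h]
  show T.map (T.η.app Z) ≫ T.μ.app Z ≫ g.f = g.f
  erw [← Category.assoc, T.right_unit]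
  simp
  exact Category.id_comp g.f

@[simp] lemma sharp_trans {Z : E} {W : T.Algebra} (g : T.free.obj Z ⟶ W) :
    sharp (trans g) = g := by
  apply Monad.Algebra.Hom.ext
  show T.map (trans g) ≫ W.a = g.f
  exact map_trans_comp g

lemma trans_injective {Z : E} {W : T.Algebra} {g₁ g₂ : T.free.obj Z ⟶ W}
    (h : trans g₁ = trans g₂) : g₁ = g₂ := by
  rw [← sharp_trans g₁, ← sharp_trans g₂, h]

@[simp] lemma trans_sharp_comp {Z Z' : E} {W : T.Algebra} (p : Z' ⟶ T.obj Z)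
    (g : T.free.obj Z ⟶ W) :
    trans ((sharp (W := T.free.obj Z) p) ≫ g) = p ≫ g.f := by
  show T.η.app Z' ≫ (T.map p ≫ T.μ.app Z) ≫ g.f = p ≫ g.f
  erw [← Category.assoc, ← Category.assoc, ← T.η.naturality p]
  simp

@[simp] lemma trans_comp {Z : E} {W W' : T.Algebra} (g : T.free.obj Z ⟶ W) (k : W ⟶ W') :
    trans (g ≫ k) = trans g ≫ k.f := by
  simp [trans]
  exact (Category.assoc _ _ _).symm

lemma sharp_free_comp {Z Z' : E} {W : T.Algebra} (y : Z' ⟶ Z) (x : Z ⟶ W.A) :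
    sharp (y ≫ x) = T.free.map y ≫ sharp x := by
  apply trans_injective
  rw [trans_sharp, trans_comp]
  show y ≫ x = (T.η.app Z' ≫ T.map y) ≫ (sharp x).f
  rw [← T.η.naturality y]
  have := trans_sharp x
  simp only [trans] at this
  erw [Category.assoc, this]
  rfl

lemma sharp_comp_sharp {Z Z' Z'' : E} (v : Z'' ⟶ T.obj Z') (v' : Z' ⟶ T.obj Z) :
    (sharp (W := T.free.obj Z) (v ≫ T.map v' ≫ T.μ.app Z)) =
      sharp (W := T.free.obj Z') v ≫ sharp (W := T.free.obj Z) v' := by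
  apply trans_injective
  rw [trans_sharp, trans_sharp_comp]
  rfl

lemma sharp_comp_free {Z Z' Z'' : E} (v : Z'' ⟶ T.obj Z') (y : Z' ⟶ Z) :
    sharp (W := T.free.obj Z) (v ≫ T.map y) =
      sharp (W := T.free.obj Z') v ≫ T.free.map y := by
  apply trans_injective
  rw [trans_sharp, trans_comp]
  erw [trans_sharp]
  rfl

@[simp] lemma sharp_eta {Z : E} : sharp (W := T.free.obj Z) (T.η.app Z) = 𝟙 (T.free.obj Z) := by
  apply trans_injective
  erw [trans_sharp]
  show T.η.app Z = T.η.app Z ≫ 𝟙 _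
  simp

lemma trans_free_comp {Z Z' : E} {W : T.Algebra} (y : Z' ⟶ Z) (g : T.free.obj Z ⟶ W) :
    trans (T.free.map y ≫ g) = y ≫ trans g := by
  show T.η.app Z' ≫ T.map y ≫ g.f = y ≫ T.η.app Z ≫ g.f
  erw [← Category.assoc, ← T.η.naturality y]
  simp
  exact Category.assoc _ _ _

end Adjunction

variable (i : A ⥤ E) (T : Monad E)

/-- An object of `A` seen as an object of `Θ_T`. -/
abbrev toTh (a : A) : ThetaT i T := a

/-- An object of `Θ_T` seen as an object of `A`. -/
abbrev toA (θ : ThetaT i T) : A := θ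

/-- `sharp` viewed as a morphism of `ThetaT i T`. -/
def mkHom {a b : A} (v : i.obj b ⟶ T.obj (i.obj a)) :
    toTh i T b ⟶ toTh i T a :=
  InducedCategory.homMk (sharp (W := T.free.obj (i.obj a)) v)

lemma mkHom_comp_left {a b b' : A} (u : b' ⟶ b) (v : i.obj b ⟶ T.obj (i.obj a)) :
    mkHom i T (i.map u ≫ v) = (jT i T).map u ≫ mkHom i T v :=
  InducedCategory.hom_ext (sharp_free_comp (W := T.free.obj (i.obj a)) (i.map u) v)

lemma mkHom_comp_right {a a' b : A} (v : i.obj b ⟶ T.obj (i.obj a')) (t : a' ⟶ a) :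
    mkHom i T (v ≫ T.map (i.map t)) = mkHom i T v ≫ (jT i T).map t :=
  InducedCategory.hom_ext (sharp_comp_free (Z := i.obj a) v (i.map t))

lemma mkHom_mul {a a' b : A} (v : i.obj b ⟶ T.obj (i.obj a))
    (v' : i.obj a ⟶ T.obj (i.obj a')) :
    mkHom i T (v ≫ T.map v' ≫ T.μ.app (i.obj a')) = mkHom i T v ≫ mkHom i T v' :=
  InducedCategory.hom_ext (sharp_comp_sharp v v')

lemma mkHom_eta (b : A) : mkHom i T (T.η.app (i.obj b)) = 𝟙 (toTh i T b) :=
  InducedCategory.hom_ext sharp_eta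

lemma mkHom_trans {a b : A} (m : toTh i T b ⟶ toTh i T a) :
    mkHom i T (trans (W := T.free.obj (i.obj a)) m.hom) = m :=
  InducedCategory.hom_ext (sharp_trans m.hom)

lemma trans_mkHom_comp {a b : A} {W : T.Algebra} (v : i.obj b ⟶ T.obj (i.obj a))
    (g : T.free.obj (i.obj a) ⟶ W) :
    trans ((mkHom i T v).hom ≫ g) = v ≫ g.f :=
  trans_sharp_comp v g

lemma iso_inv_hom_app {C : Type*} [Category C] {F G : C ⥤ Type v} (ψ : F ≅ G) (b : C)
    (x : F.obj b) : ψ.inv.app b (ψ.hom.app b x) = x := by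
  have := types_congr_hom (ψ.hom_inv_id_app b) x
  simpa using this

lemma iso_hom_inv_app {C : Type*} [Category C] {F G : C ⥤ Type v} (ψ : F ≅ G) (b : C)
    (x : G.obj b) : ψ.hom.app b (ψ.inv.app b x) = x := by
  have := types_congr_hom (ψ.inv_hom_id_app b) x
  simpa using this

/-- Faithfulness of the nerve can be tested on generalized elements. -/
lemma nu_inj (hfaith : (Presheaf.restrictedYoneda i).Faithful)
    {X Y : E} {f g : X ⟶ Y}
    (h : ∀ (b : A) (x : i.obj b ⟶ X), x ≫ f = x ≫ g) : f = g := by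
  apply hfaith.map_injective
  apply NatTrans.ext
  funext b
  ext x
  exact h b.unop x

/-- Factorization of generalized elements of `T X` through the arity cocone. -/
lemma factor
    (harities : ∀ X : E, Nonempty (IsColimit
      ((T.toFunctor ⋙ Presheaf.restrictedYoneda i).mapCocone (canCocone i X))))
    (X : E) (b : A) (u : i.obj b ⟶ T.obj X) :
    ∃ (a : A) (x : i.obj a ⟶ X) (v : i.obj b ⟶ T.obj (i.obj a)),
      v ≫ T.map x = u := by
  obtain ⟨hc⟩ := harities X
  have hc' := isColimitOfPreserves ((evaluation Aᵒᵖ (Type v)).obj (Opposite.op b)) hc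
  obtain ⟨f, y, hy⟩ := Types.jointly_surjective_of_isColimit hc' u
  exact ⟨f.left, f.hom, y, hy⟩

/-- The natural identification of `ν_A (U X)` with the restriction of `ν_T X` along `j_T`. -/
def resIso (X : T.Algebra) :
    (Presheaf.restrictedYoneda i).obj X.A ≅
      (jT i T).op ⋙ (Presheaf.restrictedYoneda (iT i T)).obj X :=
  NatIso.ofComponents
    (fun b => Equiv.toIso
      { toFun := fun x =>
          (sharp x : T.free.obj (i.obj b.unop) ⟶ X)
        invFun := fun g => trans g
        left_inv := fun x => trans_sharp x
        right_inv := fun g => sharp_trans g })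
    (by
      intro b b' u
      ext x
      exact sharp_free_comp (i.map u.unop) x)

end NerveAux

open NerveAux

/-- Nerve Theorem: if `A` is a dense generator of `E` and `T` is a
monad with arities `A` (the functor `ν_A ∘ T` sends the canonical `A`-cocones to
colimit cocones in `PSh(A)`), then `Θ_T` is a dense generator of `E^T` (the nerve
`ν_T` is fully faithful), and a presheaf on `Θ_T` lies in the essential image of
`ν_T` iff its restriction along `j_T` lies in the essential image of `ν_A`. -/
theorem nerve_theorem (i : A ⥤ E) (T : Monad E)
    (hfull : i.Full) (hfaithful : i.Faithful)
    (hdense : (Presheaf.restrictedYoneda i).Full ∧ (Presheaf.restrictedYoneda i).Faithful)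
    (harities : ∀ X : E,
      Nonempty (IsColimit
        ((T.toFunctor ⋙ Presheaf.restrictedYoneda i).mapCocone (canCocone i X)))) :
    ((Presheaf.restrictedYoneda (iT i T)).Full ∧
      (Presheaf.restrictedYoneda (iT i T)).Faithful) ∧
    (∀ P : (ThetaT i T)ᵒᵖ ⥤ Type v,
      (Presheaf.restrictedYoneda (iT i T)).essImage P ↔
        (Presheaf.restrictedYoneda i).essImage
          (((Functor.whiskeringLeft _ _ (Type v)).obj (jT i T).op).obj P)) := by
  constructor
  · constructor
    · -- Fullness of ν_T
      constructor
      intro X Y φ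
      -- restrict φ along j_T and transport through the adjunction
      let ψ : (Presheaf.restrictedYoneda i).obj X.A ⟶ (Presheaf.restrictedYoneda i).obj Y.A :=
        (resIso i T X).hom ≫ Functor.whiskerLeft (jT i T).op φ ≫ (resIso i T Y).inv
      obtain ⟨f₀, hf₀⟩ := hdense.1.map_surjective ψ
      have hstar : ∀ (b : A) (x : i.obj b ⟶ X.A),
          x ≫ f₀ = NerveAux.trans (φ.app (Opposite.op (toTh i T b)) (sharp x)) := by
        intro b x
        exact types_congr_hom (NatTrans.congr_app hf₀ (Opposite.op b)) x
      have claim : ∀ (a b : A) (v : i.obj b ⟶ T.obj (i.obj a))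
          (g : T.free.obj (i.obj a) ⟶ X),
          v ≫ g.f ≫ f₀ = v ≫ (φ.app (Opposite.op (toTh i T a)) g).f := by
        intro a b v g
        have hnat := types_congr_hom (φ.naturality (mkHom i T v).op) g
        calc v ≫ g.f ≫ f₀
            = NerveAux.trans ((mkHom i T v).hom ≫ g) ≫ f₀ := by
              erw [← Category.assoc]
              exact congrArg (· ≫ f₀) (trans_mkHom_comp i T v g).symm
          _ = NerveAux.trans (φ.app (Opposite.op (toTh i T b))
                (sharp (NerveAux.trans ((mkHom i T v).hom ≫ g)))) := hstar b _
          _ = NerveAux.trans (φ.app (Opposite.op (toTh i T b)) ((mkHom i T v).hom ≫ g)) := by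
              rw [sharp_trans]
              rfl
          _ = NerveAux.trans ((mkHom i T v).hom ≫ φ.app (Opposite.op (toTh i T a)) g) :=
              congrArg NerveAux.trans hnat
          _ = v ≫ (φ.app (Opposite.op (toTh i T a)) g).f :=
              trans_mkHom_comp i T v _
      have halg : T.map f₀ ≫ Y.a = X.a ≫ f₀ := by
        apply nu_inj i hdense.2
        intro b w
        obtain ⟨a, x, v, rfl⟩ := factor i T harities X.A b w
        have hl : (v ≫ T.map x) ≫ T.map f₀ ≫ Y.a
            = v ≫ (φ.app (Opposite.op (toTh i T a)) (sharp x)).f := by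
          rw [Category.assoc, ← Category.assoc (T.map x), ← Functor.map_comp,
            hstar a x]
          exact congrArg (fun t => v ≫ t)
            (map_trans_comp (W := Y) (φ.app (Opposite.op (toTh i T a)) (sharp x)))
        have hr : (v ≫ T.map x) ≫ X.a ≫ f₀
            = v ≫ (φ.app (Opposite.op (toTh i T a)) (sharp x)).f := by
          have : (v ≫ T.map x) ≫ X.a ≫ f₀ = v ≫ (sharp x : T.free.obj (i.obj a) ⟶ X).f ≫ f₀ := by
            show _ = v ≫ (T.map x ≫ X.a) ≫ f₀
            simp
          rw [this, claim a b v (sharp x)]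
        rw [hl, hr]
      refine ⟨⟨f₀, halg⟩, ?_⟩
      apply NatTrans.ext
      funext θ
      ext g
      show g ≫ (⟨f₀, halg⟩ : X ⟶ Y) = φ.app θ g
      apply Monad.Algebra.Hom.ext
      show g.f ≫ f₀ = (φ.app θ g).f
      apply nu_inj i hdense.2
      intro b w
      exact claim θ.unop b w g
    · -- Faithfulness of ν_T
      constructor
      intro X Y f g h
      apply Monad.Algebra.Hom.ext
      apply nu_inj i hdense.2
      intro b x
      have := types_congr_hom (NatTrans.congr_app h (Opposite.op (toTh i T b)))
        (sharp (W := X) x)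
      have h2 : NerveAux.trans (sharp (W := X) x ≫ f) = NerveAux.trans (sharp (W := X) x ≫ g) :=
        congrArg NerveAux.trans this
      rw [trans_comp, trans_comp, trans_sharp] at h2
      exact h2
  · -- Essential image
    intro P
    constructor
    · rintro ⟨X, ⟨e⟩⟩
      exact ⟨X.A, ⟨resIso i T X ≪≫ Functor.isoWhiskerLeft (jT i T).op e⟩⟩
    · rintro ⟨X₀, ⟨ψ⟩⟩
      -- ψ : ν_A X₀ ≅ restriction of P along j_T
      -- build the structure map by descending along the arity colimit
      let c : Cocone ((CostructuredArrow.proj i X₀ ⋙ i) ⋙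
          (T.toFunctor ⋙ Presheaf.restrictedYoneda i)) :=
      { pt := (Presheaf.restrictedYoneda i).obj X₀
        ι :=
        { app := fun f =>
          { app := fun b => ↾(fun v => ψ.inv.app b
              (P.map (mkHom i T v).op (ψ.hom.app (Opposite.op f.left) f.hom)))
            naturality := by
              intro b b' u
              ext v
              show ψ.inv.app b' (P.map (mkHom i T (i.map u.unop ≫ v)).op
                  (ψ.hom.app (Opposite.op f.left) f.hom)) = _
              erw [mkHom_comp_left, op_comp, Functor.map_comp]
              exact types_congr_hom (ψ.inv.naturality u)
                (P.map (mkHom i T v).op (ψ.hom.app (Opposite.op f.left) f.hom)) }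
          naturality := by
            intro f f' t
            apply NatTrans.ext
            funext b
            ext v
            have e1 : mkHom i T (v ≫ T.map (i.map t.left))
                = mkHom i T v ≫ (jT i T).map t.left := mkHom_comp_right i T v t.left
            have e2 : ψ.hom.app (Opposite.op f.left) f.hom
                = P.map ((jT i T).map t.left).op
                    (ψ.hom.app (Opposite.op f'.left) f'.hom) := by
              have hw : i.map t.left ≫ f'.hom = f.hom := CostructuredArrow.w t
              calc ψ.hom.app (Opposite.op f.left) f.hom
                  = ψ.hom.app (Opposite.op f.left) (i.map t.left ≫ f'.hom) := by rw [hw]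
                _ = P.map ((jT i T).map t.left).op
                    (ψ.hom.app (Opposite.op f'.left) f'.hom) :=
                    types_congr_hom (ψ.hom.naturality t.left.op) f'.hom
            show ψ.inv.app b (P.map (mkHom i T (v ≫ T.map (i.map t.left))).op
                (ψ.hom.app (Opposite.op f'.left) f'.hom))
              = ψ.inv.app b (P.map (mkHom i T v).op (ψ.hom.app (Opposite.op f.left) f.hom))
            erw [e1, op_comp, Functor.map_comp, e2]
            rfl } }
      obtain ⟨hc⟩ := harities X₀
      obtain ⟨(h₀ : T.obj X₀ ⟶ X₀), hh₀⟩ := hdense.1.map_surjective (hc.desc c)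
      have fac : ∀ (a b : A) (x : i.obj a ⟶ X₀) (v : i.obj b ⟶ T.obj (i.obj a)),
          (v ≫ T.map x) ≫ h₀ = ψ.inv.app (Opposite.op b)
            (P.map (mkHom i T v).op (ψ.hom.app (Opposite.op a) x)) := by
        intro a b x v
        have H := hc.fac c (CostructuredArrow.mk x)
        rw [← hh₀] at H
        exact types_congr_hom (NatTrans.congr_app H (Opposite.op b)) v
      have hunit : T.η.app X₀ ≫ h₀ = 𝟙 X₀ := by
        apply nu_inj i hdense.2
        intro b x
        have h1 : x ≫ T.η.app X₀ ≫ h₀ = (T.η.app (i.obj b) ≫ T.map x) ≫ h₀ := by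
          erw [← Category.assoc]
          congr 1
          exact T.η.naturality x
        have h2 : (T.η.app (i.obj b) ≫ T.map x) ≫ h₀
            = ψ.inv.app (Opposite.op b)
              (P.map (mkHom i T (T.η.app (i.obj b))).op (ψ.hom.app (Opposite.op b) x)) :=
          fac b b x (T.η.app (i.obj b))
        rw [h1, h2, mkHom_eta]
        simp only [op_id, CategoryTheory.Functor.map_id, types_id_apply, ConcreteCategory.id_apply]
        erw [iso_inv_hom_app]
        simp
      have hassoc : T.μ.app X₀ ≫ h₀ = T.map h₀ ≫ h₀ := by
        apply nu_inj i hdense.2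
        intro b w
        obtain ⟨a, z, v, rfl⟩ := factor i T harities (T.obj X₀) b w
        obtain ⟨a', x, v', rfl⟩ := factor i T harities X₀ a z
        have hμ : T.map (v' ≫ T.map x) ≫ T.μ.app X₀
            = (T.map v' ≫ T.μ.app (i.obj a')) ≫ T.map x := by
          rw [Functor.map_comp, Category.assoc, Category.assoc]
          congr 1
          exact T.μ.naturality x
        have hl : (v ≫ T.map (v' ≫ T.map x)) ≫ T.μ.app X₀ ≫ h₀
            = ψ.inv.app (Opposite.op b) (P.map (mkHom i T v).op
              (P.map (mkHom i T v').op (ψ.hom.app (Opposite.op a') x))) := by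
          erw [Category.assoc, ← Category.assoc (T.map (v' ≫ T.map x)), hμ]
          have : v ≫ ((T.map v' ≫ T.μ.app (i.obj a')) ≫ T.map x) ≫ h₀
              = ((v ≫ T.map v' ≫ T.μ.app (i.obj a')) ≫ T.map x) ≫ h₀ := by
            simp only [Category.assoc]
          rw [this, fac a' b x (v ≫ T.map v' ≫ T.μ.app (i.obj a')), mkHom_mul]
          simp only [op_comp, Functor.map_comp, types_comp_apply, ConcreteCategory.comp_apply]
          rfl
        have hr : (v ≫ T.map (v' ≫ T.map x)) ≫ T.map h₀ ≫ h₀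
            = ψ.inv.app (Opposite.op b) (P.map (mkHom i T v).op
              (P.map (mkHom i T v').op (ψ.hom.app (Opposite.op a') x))) := by
          have h3 : (v ≫ T.map (v' ≫ T.map x)) ≫ T.map h₀ ≫ h₀
              = (v ≫ T.map ((v' ≫ T.map x) ≫ h₀)) ≫ h₀ := by
            simp only [Functor.map_comp, Category.assoc]
          rw [h3, fac a' a x v']
          rw [fac a b (ψ.inv.app (Opposite.op a)
            (P.map (mkHom i T v').op (ψ.hom.app (Opposite.op a') x))) v]
          erw [iso_hom_inv_app]
        erw [hl, hr]
      let Xalg : T.Algebra := ⟨X₀, h₀, hunit, hassoc⟩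
      refine ⟨Xalg, ⟨?_⟩⟩
      refine NatIso.ofComponents (fun θ => Equiv.toIso
        { toFun := fun g => ψ.hom.app (Opposite.op (toA i T θ.unop)) (NerveAux.trans g)
          invFun := fun p => sharp (W := Xalg) (ψ.inv.app (Opposite.op (toA i T θ.unop)) p)
          left_inv := fun g => by
            show sharp (ψ.inv.app (Opposite.op (toA i T θ.unop))
              (ψ.hom.app (Opposite.op (toA i T θ.unop)) (NerveAux.trans g))) = g
            erw [iso_inv_hom_app]
            exact sharp_trans g
          right_inv := fun p => by
            show ψ.hom.app (Opposite.op (toA i T θ.unop))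
              (NerveAux.trans (sharp (W := Xalg) (ψ.inv.app (Opposite.op (toA i T θ.unop)) p))) = p
            erw [trans_sharp]
            exact iso_hom_inv_app ψ _ p }) ?_
      intro θ θ' m
      ext g
      show ψ.hom.app (Opposite.op (toA i T θ'.unop)) (NerveAux.trans (m.unop.hom ≫ g))
        = P.map m (ψ.hom.app (Opposite.op (toA i T θ.unop)) (NerveAux.trans g))
      have key := fac (toA i T θ.unop) (toA i T θ'.unop) (NerveAux.trans g)
        (NerveAux.trans (W := T.free.obj (i.obj (toA i T θ.unop))) m.unop.hom)
      have hL : (NerveAux.trans (W := T.free.obj (i.obj (toA i T θ.unop))) m.unop.hom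
            ≫ T.map (NerveAux.trans g)) ≫ h₀ = NerveAux.trans (m.unop.hom ≫ g) := by
        erw [Category.assoc]
        have : T.map (NerveAux.trans g) ≫ h₀ = g.f := map_trans_comp g
        erw [this]
        erw [← trans_sharp_comp (NerveAux.trans (W := T.free.obj (i.obj (toA i T θ.unop))) m.unop.hom) g]
        congr 1
        rw [sharp_trans]
      erw [hL, mkHom_trans] at key
      rw [key]
      erw [iso_hom_inv_app]
      congr 1
end

section
/- Let E have a terminal object 1 and R:E→F be a functor. The following are equivalent: (i) R is a local right adjoint (each induced functor R_X:E/X→F/RX has a left adjoint); (ii) for each morphism f:B→RX the category Fact_E(R,f) of factorisations of f through R has an initial object; (iii) the functor R_1:E→F/R1 has a left adjoint; (iv) every f:B→RX factors as R(h)∘g with g R-generic. -/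
open CategoryTheory CategoryTheory.Limits

universe v u₁ u₂

variable {E : Type u₁} {F : Type u₂} [Category.{v} E] [Category.{v} F]

/-- `g : B ⟶ R A` is `R`-generic. -/
def RGeneric (R : E ⥤ F) {B : F} {A : E} (g : B ⟶ R.obj A) : Prop :=
  ∀ {A' X : E} (α : B ⟶ R.obj A') (β : A ⟶ X) (γ : A' ⟶ X),
    g ≫ R.map β = α ≫ R.map γ →
      ∃! δ : A ⟶ A', g ≫ R.map δ = α ∧ δ ≫ γ = β

/-- The factorisation category `Fact_E(R, f)` (no restriction on the middle object). -/
structure FactE (R : E ⥤ F) (B : F) (X : E) (f : B ⟶ R.obj X) where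
  a : E
  g : B ⟶ R.obj a
  h : a ⟶ X
  fac : g ≫ R.map h = f

instance (R : E ⥤ F) (B : F) (X : E) (f : B ⟶ R.obj X) :
    Category (FactE R B X f) where
  Hom o₁ o₂ := {k : o₁.a ⟶ o₂.a // o₁.g ≫ R.map k = o₂.g ∧ k ≫ o₂.h = o₁.h}
  id o := ⟨𝟙 _, by simp⟩
  comp {o₁ o₂ o₃} k l := ⟨k.1 ≫ l.1, by
    obtain ⟨k, hk1, hk2⟩ := k
    obtain ⟨l, hl1, hl2⟩ := l
    constructor
    · simp [← hl1, ← hk1]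
    · simp [hk2, hl2]⟩
  id_comp f := by apply Subtype.ext; simp
  comp_id f := by apply Subtype.ext; simp
  assoc f g h := by apply Subtype.ext; simp

/-- The functor `R_1 : E ⥤ F/R1` induced by a functor `R` when `E` has a terminal
object. -/
noncomputable def Rone (R : E ⥤ F) [HasTerminal E] : E ⥤ Over (R.obj (⊤_ E)) where
  obj Y := Over.mk (R.map (terminal.from Y))
  map {Y Z} f := Over.homMk (R.map f) (by
    dsimp
    rw [← R.map_comp]
    congr 1
    simp)

section Aux

variable (R : E ⥤ F)

/-- A generic factorisation gives an initial object in the factorisation category. -/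
theorem factE_hasInitial_of_generic {B : F} {X : E} {f : B ⟶ R.obj X}
    {A : E} (g : B ⟶ R.obj A) (h : A ⟶ X) (hg : RGeneric R g) (hf : g ≫ R.map h = f) :
    HasInitial (FactE R B X f) := by
  have hN : ∀ o : FactE R B X f, Nonempty ((⟨A, g, h, hf⟩ : FactE R B X f) ⟶ o) := by
    intro o
    obtain ⟨δ, hδ, -⟩ := hg o.g h o.h (by rw [hf, o.fac])
    exact ⟨⟨δ, hδ⟩⟩
  have hS : ∀ o : FactE R B X f,
      Subsingleton ((⟨A, g, h, hf⟩ : FactE R B X f) ⟶ o) := by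
    intro o
    obtain ⟨δ, hδ, huniq⟩ := hg o.g h o.h (by rw [hf, o.fac])
    exact ⟨fun m m' => Subtype.ext (by rw [huniq m.1 m.2, huniq m'.1 m'.2])⟩
  exact @hasInitial_of_unique _ _ ⟨A, g, h, hf⟩ hN hS

/-- Initial objects in factorisation categories over the terminal object give generic
factorisations. -/
theorem genericFactorisation_of_terminal_initials [HasTerminal E]
    (hI : ∀ (B : F) (f' : B ⟶ R.obj (⊤_ E)), HasInitial (FactE R B (⊤_ E) f'))
    (B : F) (X : E) (f : B ⟶ R.obj X) :
    ∃ (A : E) (g : B ⟶ R.obj A) (h : A ⟶ X), RGeneric R g ∧ g ≫ R.map h = f := by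
  haveI := hI B (f ≫ R.map (terminal.from X))
  let I := ⊥_ (FactE R B (⊤_ E) (f ≫ R.map (terminal.from X)))
  let oX : FactE R B (⊤_ E) (f ≫ R.map (terminal.from X)) := ⟨X, f, terminal.from X, rfl⟩
  let k := initial.to oX
  refine ⟨I.a, I.g, k.1, ?_, k.2.1⟩
  intro A' X' α β γ hcomm
  have key : ∀ (A'' : E) (α' : B ⟶ R.obj A'') (γ' : A'' ⟶ X'),
      α' ≫ R.map γ' = I.g ≫ R.map β →
      α' ≫ R.map (terminal.from A'') = f ≫ R.map (terminal.from X) := by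
    intro A'' α' γ' hα'
    have e1 : terminal.from A'' = γ' ≫ terminal.from X' := terminal.hom_ext _ _
    have e2 : β ≫ terminal.from X' = I.h := terminal.hom_ext _ _
    rw [e1, R.map_comp, ← Category.assoc, hα', Category.assoc, ← R.map_comp, e2, I.fac]
  let o₁ : FactE R B (⊤_ E) (f ≫ R.map (terminal.from X)) :=
    ⟨A', α, terminal.from A', key A' α γ hcomm.symm⟩
  let δ := initial.to o₁
  have hδ1 : I.g ≫ R.map δ.1 = α := δ.2.1
  have hcomp : δ.1 ≫ γ = β := by
    let o₂ : FactE R B (⊤_ E) (f ≫ R.map (terminal.from X)) :=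
      ⟨X', I.g ≫ R.map β, terminal.from X',
        key X' (I.g ≫ R.map β) (𝟙 X') (by simp)⟩
    let m₁ : I ⟶ o₂ := ⟨δ.1 ≫ γ, by
      show I.g ≫ R.map (δ.1 ≫ γ) = I.g ≫ R.map β
      rw [R.map_comp, ← Category.assoc, hδ1, hcomm], terminal.hom_ext _ _⟩
    let m₂ : I ⟶ o₂ := ⟨β, by
      show I.g ≫ R.map β = I.g ≫ R.map β
      rfl, terminal.hom_ext _ _⟩
    have e := initial.hom_ext m₁ m₂
    exact Subtype.ext_iff.mp e
  refine ⟨δ.1, ⟨hδ1, hcomp⟩, ?_⟩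
  rintro δ' ⟨h1, h2⟩
  let mδ' : I ⟶ o₁ := ⟨δ', by
    show I.g ≫ R.map δ' = α
    exact h1, terminal.hom_ext _ _⟩
  exact Subtype.ext_iff.mp (initial.hom_ext mδ' δ)

/-- (i) → (ii). -/
theorem factE_hasInitial_of_post_isRightAdjoint {X : E}
    (hR : (Over.post R (X := X)).IsRightAdjoint) (B : F) (f : B ⟶ R.obj X) :
    HasInitial (FactE R B X f) := by
  haveI : ∀ A, HasInitial (StructuredArrow A (Over.post R (X := X))) :=
    isRightAdjoint_iff_hasInitial_structuredArrow.mp hR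
  let I := ⊥_ (StructuredArrow (Over.mk f) (Over.post R (X := X)))
  have w0 : I.hom.left ≫ R.map I.right.hom = f := by exact Over.w I.hom
  let mkS : FactE R B X f → StructuredArrow (Over.mk f) (Over.post R (X := X)) :=
    fun o => StructuredArrow.mk (Y := Over.mk o.h) (Over.homMk o.g (by exact o.fac))
  have hN : ∀ o : FactE R B X f,
      Nonempty ((⟨I.right.left, I.hom.left, I.right.hom, w0⟩ : FactE R B X f) ⟶ o) := by
    intro o
    let φ := initial.to (mkS o)
    refine ⟨⟨φ.right.left, ?_, ?_⟩⟩
    · exact congrArg CommaMorphism.left (StructuredArrow.w φ)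
    · exact Over.w φ.right
  have hS : ∀ o : FactE R B X f,
      Subsingleton ((⟨I.right.left, I.hom.left, I.right.hom, w0⟩ : FactE R B X f) ⟶ o) := by
    intro o
    constructor
    intro m m'
    let build : ((⟨I.right.left, I.hom.left, I.right.hom, w0⟩ : FactE R B X f) ⟶ o) →
        (I ⟶ mkS o) := fun m =>
      StructuredArrow.homMk (Over.homMk m.1 m.2.2) (by
        ext
        exact m.2.1)
    have e := congrArg (fun (t : I ⟶ mkS o) => t.right.left)
      (initial.hom_ext (build m) (build m'))
    exact Subtype.ext (show m.1 = m'.1 from e)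
  exact @hasInitial_of_unique _ _ ⟨I.right.left, I.hom.left, I.right.hom, w0⟩ hN hS

/-- (ii) → (i). -/
theorem post_isRightAdjoint_of_factE {X : E}
    (hI : ∀ (B : F) (f : B ⟶ R.obj X), HasInitial (FactE R B X f)) :
    (Over.post R (X := X)).IsRightAdjoint := by
  rw [isRightAdjoint_iff_hasInitial_structuredArrow]
  intro A
  haveI := hI A.left A.hom
  let I := ⊥_ (FactE R A.left X A.hom)
  let u : A ⟶ (Over.post R (X := X)).obj (Over.mk I.h) :=
    Over.homMk I.g (by exact I.fac)
  have hN : ∀ S : StructuredArrow A (Over.post R (X := X)),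
      Nonempty (StructuredArrow.mk u ⟶ S) := by
    intro S
    let oS : FactE R A.left X A.hom :=
      ⟨S.right.left, S.hom.left, S.right.hom, by exact Over.w S.hom⟩
    let k := initial.to oS
    exact ⟨StructuredArrow.homMk (Over.homMk k.1 k.2.2) (by
      ext
      exact k.2.1)⟩
  have hS : ∀ S : StructuredArrow A (Over.post R (X := X)),
      Subsingleton (StructuredArrow.mk u ⟶ S) := by
    intro S
    constructor
    intro m m'
    let oS : FactE R A.left X A.hom :=
      ⟨S.right.left, S.hom.left, S.right.hom, by exact Over.w S.hom⟩
    let build : (StructuredArrow.mk u ⟶ S) → (I ⟶ oS) := fun m =>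
      ⟨m.right.left, by exact congrArg CommaMorphism.left (StructuredArrow.w m),
        by exact Over.w m.right⟩
    have e := congrArg Subtype.val (initial.hom_ext (build m) (build m'))
    exact StructuredArrow.ext m m'
      (Over.OverMorphism.ext (show m.right.left = m'.right.left from e))
  exact @hasInitial_of_unique _ _ (StructuredArrow.mk u) hN hS

/-- (ii) → (iii). -/
theorem rone_isRightAdjoint_of_factE [HasTerminal E]
    (hI : ∀ (B : F) (f : B ⟶ R.obj (⊤_ E)), HasInitial (FactE R B (⊤_ E) f)) :
    (Rone R).IsRightAdjoint := by
  rw [isRightAdjoint_iff_hasInitial_structuredArrow]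
  intro A
  haveI := hI A.left A.hom
  let I := ⊥_ (FactE R A.left (⊤_ E) A.hom)
  let u : A ⟶ (Rone R).obj I.a := Over.homMk I.g (by
    show I.g ≫ R.map (terminal.from I.a) = A.hom
    rw [terminal.hom_ext (terminal.from I.a) I.h]
    exact I.fac)
  have hN : ∀ S : StructuredArrow A (Rone R), Nonempty (StructuredArrow.mk u ⟶ S) := by
    intro S
    let oS : FactE R A.left (⊤_ E) A.hom :=
      ⟨S.right, S.hom.left, terminal.from S.right, Over.w S.hom⟩
    let k := initial.to oS
    exact ⟨StructuredArrow.homMk k.1 (by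
      ext
      exact k.2.1)⟩
  have hS : ∀ S : StructuredArrow A (Rone R), Subsingleton (StructuredArrow.mk u ⟶ S) := by
    intro S
    constructor
    intro m m'
    let oS : FactE R A.left (⊤_ E) A.hom :=
      ⟨S.right, S.hom.left, terminal.from S.right, Over.w S.hom⟩
    let build : (StructuredArrow.mk u ⟶ S) → (I ⟶ oS) := fun m =>
      ⟨m.right, congrArg CommaMorphism.left (StructuredArrow.w m), terminal.hom_ext _ _⟩
    have e := congrArg Subtype.val (initial.hom_ext (build m) (build m'))
    exact StructuredArrow.ext m m' (show m.right = m'.right from e)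
  exact @hasInitial_of_unique _ _ (StructuredArrow.mk u) hN hS

/-- (iii) → initial objects in factorisation categories over the terminal object. -/
theorem terminal_factE_hasInitial_of_rone [HasTerminal E]
    (hR : (Rone R).IsRightAdjoint) (B : F) (f' : B ⟶ R.obj (⊤_ E)) :
    HasInitial (FactE R B (⊤_ E) f') := by
  haveI : ∀ A, HasInitial (StructuredArrow A (Rone R)) :=
    isRightAdjoint_iff_hasInitial_structuredArrow.mp hR
  let I := ⊥_ (StructuredArrow (Over.mk f') (Rone R))
  have w0 : I.hom.left ≫ R.map (terminal.from I.right) = f' := Over.w I.hom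
  let o₀ : FactE R B (⊤_ E) f' := ⟨I.right, I.hom.left, terminal.from I.right, w0⟩
  let mkS : FactE R B (⊤_ E) f' → StructuredArrow (Over.mk f') (Rone R) := fun o =>
    StructuredArrow.mk (Y := o.a) (Over.homMk o.g (by
      show o.g ≫ R.map (terminal.from o.a) = f'
      rw [terminal.hom_ext (terminal.from o.a) o.h]
      exact o.fac))
  have hN : ∀ o : FactE R B (⊤_ E) f', Nonempty (o₀ ⟶ o) := by
    intro o
    let φ := initial.to (mkS o)
    exact ⟨⟨φ.right, congrArg CommaMorphism.left (StructuredArrow.w φ),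
      terminal.hom_ext _ _⟩⟩
  have hS : ∀ o : FactE R B (⊤_ E) f', Subsingleton (o₀ ⟶ o) := by
    intro o
    constructor
    intro m m'
    let build : (o₀ ⟶ o) → (I ⟶ mkS o) := fun m =>
      StructuredArrow.homMk m.1 (by
        ext
        exact m.2.1)
    have e := congrArg (fun (t : I ⟶ mkS o) => t.right)
      (initial.hom_ext (build m) (build m'))
    exact Subtype.ext (show m.1 = m'.1 from e)
  exact @hasInitial_of_unique _ _ o₀ hN hS

end Aux

/-- for `E` with a terminal object and `R : E ⥤ F`, the following are
equivalent: (i) `R` is a local right adjoint; (ii) all factorisation categories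
`Fact_E(R,f)` have initial objects; (iii) `R_1 : E ⥤ F/R1` has a left adjoint;
(iv) every `f : B ⟶ R X` admits a generic factorisation. -/
theorem localRightAdjoint_tfae (R : E ⥤ F) [HasTerminal E] :
    [ (∀ X : E, (Over.post R (X := X)).IsRightAdjoint),
      (∀ (B : F) (X : E) (f : B ⟶ R.obj X), HasInitial (FactE R B X f)),
      (Rone R).IsRightAdjoint,
      (∀ (B : F) (X : E) (f : B ⟶ R.obj X),
        ∃ (A : E) (g : B ⟶ R.obj A) (h : A ⟶ X),
          RGeneric R g ∧ g ≫ R.map h = f) ].TFAE := by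
  tfae_have 1 → 2 := fun h B X f => factE_hasInitial_of_post_isRightAdjoint R (h X) B f
  tfae_have 2 → 1 := fun h X => post_isRightAdjoint_of_factE R (fun B f => h B X f)
  tfae_have 2 → 3 := fun h => rone_isRightAdjoint_of_factE R (fun B f => h B (⊤_ E) f)
  tfae_have 3 → 4 := fun h =>
    genericFactorisation_of_terminal_initials R (terminal_factE_hasInitial_of_rone R h)
  tfae_have 4 → 2 := by
    intro h B X f
    obtain ⟨A, g, hh, hg, hf⟩ := h B X f
    exact factE_hasInitial_of_generic R g hh hg hf
  tfae_finish
end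

section
/- For every finite connected acyclic graph p, viewed as an involutive graph, the free groupoid Gp on p is the chaotic (indiscrete) groupoid on its set of vertices: between any two vertices of p there is exactly one reduced path. Consequently the full subcategory of the category of groupoids spanned by the free groupoids on finite connected acyclic graphs is equivalent to the category Δ_sym of nonempty finite sets and all functions. -/
open CategoryTheory

/-- An involutive graph: a graph with an involution on edges exchanging source
and target. -/
structure InvGraph : Type 1 where
  V : Type
  E : Type
  s : E → V
  t : E → V
  ι : E → E
  ι_ι : ∀ e, ι (ι e) = e
  s_ι : ∀ e, s (ι e) = t e

/-- Morphisms of involutive graphs. -/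
structure InvGraph.Hom (X Y : InvGraph) where
  fV : X.V → Y.V
  fE : X.E → Y.E
  s_comm : ∀ e, Y.s (fE e) = fV (X.s e)
  t_comm : ∀ e, Y.t (fE e) = fV (X.t e)
  ι_comm : ∀ e, Y.ι (fE e) = fE (X.ι e)

instance : Category InvGraph where
  Hom := InvGraph.Hom
  id X := ⟨id, id, fun _ => rfl, fun _ => rfl, fun _ => rfl⟩
  comp {X Y Z} f g := ⟨g.fV ∘ f.fV, g.fE ∘ f.fE,
    fun e => by simp [Function.comp, g.s_comm, f.s_comm],
    fun e => by simp [Function.comp, g.t_comm, f.t_comm],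
    fun e => by simp [Function.comp, g.ι_comm, f.ι_comm]⟩
  id_comp f := rfl
  comp_id f := rfl
  assoc f g h := rfl

/-- The forgetful functor from groupoids to involutive graphs, sending a groupoid
to its underlying involutive graph with involution `f ↦ f⁻¹`. -/
def grpdToInv : Grpd.{0,0} ⥤ InvGraph where
  obj G :=
    { V := G.α
      E := Σ a b : G.α, a ⟶ b
      s := fun e => e.1
      t := fun e => e.2.1
      ι := fun e => ⟨e.2.1, e.1, Groupoid.inv e.2.2⟩
      ι_ι := fun e => by
        obtain ⟨a, b, f⟩ := e
        simp
      s_ι := fun _ => rfl }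
  map {G H} F :=
    { fV := F.obj
      fE := fun e => ⟨F.obj e.1, F.obj e.2.1, F.map e.2.2⟩
      s_comm := fun _ => rfl
      t_comm := fun _ => rfl
      ι_comm := fun e => by
        obtain ⟨a, b, f⟩ := e
        simp [Groupoid.inv_eq_inv] }
  map_id G := rfl
  map_comp f g := rfl

/-- The involutive graph associated to a combinatorial graph (a symmetric
relation): a dual pair of edges for each pair of adjacent vertices. -/
def ofSimpleGraph {V : Type} (G : SimpleGraph V) : InvGraph where
  V := V
  E := {p : V × V // G.Adj p.1 p.2}
  s := fun e => e.1.1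
  t := fun e => e.1.2
  ι := fun e => ⟨(e.1.2, e.1.1), e.2.symm⟩
  ι_ι := fun e => rfl
  s_ι := fun e => rfl

/-- The chaotic (indiscrete) groupoid on a type `V`. -/
def Chaotic (V : Type) : Type := V

instance (V : Type) : Groupoid (Chaotic V) where
  Hom _ _ := PUnit
  id _ := ⟨⟩
  comp _ _ := ⟨⟩
  inv _ := ⟨⟩

namespace FreeTree
open SimpleGraph CategoryTheory

instance (H : Grpd.{0,0}) : Groupoid (grpdToInv.obj H).V := H.str

section SigmaLemmas
variable {C : Type} [Groupoid C]

lemma sig_eq (E : Σ a b : C, a ⟶ b) {a b : C} (p : E.1 = a) (q : E.2.1 = b) :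
    (⟨a, b, eqToHom p.symm ≫ E.2.2 ≫ eqToHom q⟩ : Σ a b : C, a ⟶ b) = E := by
  obtain ⟨x, y, f⟩ := E
  dsimp at p q
  subst p; subst q
  simp

lemma conj_inv (E1 E2 : Σ a b : C, a ⟶ b)
    (hI : E2 = ⟨E1.2.1, E1.1, Groupoid.inv E1.2.2⟩)
    {a b : C} (p1 : E1.1 = a) (q1 : E1.2.1 = b) (p2 : E2.1 = b) (q2 : E2.2.1 = a) :
    (eqToHom p1.symm ≫ E1.2.2 ≫ eqToHom q1) ≫
      (eqToHom p2.symm ≫ E2.2.2 ≫ eqToHom q2) = 𝟙 a := by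
  subst hI
  obtain ⟨x, y, f⟩ := E1
  dsimp at p1 q1 p2 q2
  subst p1; subst q1
  simp [Groupoid.inv_eq_inv]

end SigmaLemmas

section Tree
variable {V : Type} {G : SimpleGraph V} {H : Grpd.{0,0}}
variable (η : ofSimpleGraph G ⟶ grpdToInv.obj H)

def m {a b : V} (h : G.Adj a b) : η.fV a ⟶ η.fV b :=
  eqToHom (η.s_comm ⟨(a,b),h⟩).symm ≫ (η.fE ⟨(a,b),h⟩).2.2 ≫ eqToHom (η.t_comm ⟨(a,b),h⟩)

lemma m_inv {a b : V} (h : G.Adj a b) : m η h ≫ m η h.symm = 𝟙 (η.fV a) :=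
  conj_inv (η.fE ⟨(a,b),h⟩) (η.fE ⟨(b,a),h.symm⟩) ((η.ι_comm ⟨(a,b),h⟩).symm)
    (η.s_comm _) (η.t_comm _) (η.s_comm _) (η.t_comm _)

def phi : ∀ {a b : V}, G.Walk a b → (η.fV a ⟶ η.fV b)
  | _, _, .nil => 𝟙 _
  | _, _, .cons h p => m η h ≫ phi p

lemma phi_append {a b c : V} (p : G.Walk a b) (q : G.Walk b c) :
    phi η (p.append q) = phi η p ≫ phi η q := by
  induction p with
  | nil => simp [phi]
  | cons h p ih => simp [phi, ih]

variable (hP : ∀ a b : V, ∃! p : G.Walk a b, p.IsPath)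

noncomputable def pth (a b : V) : G.Walk a b := (hP a b).choose

lemma pth_isPath (a b : V) : (pth hP a b).IsPath := (hP a b).choose_spec.1

lemma pth_eq {a b : V} (w : G.Walk a b) (hw : w.IsPath) : w = pth hP a b :=
  (hP a b).choose_spec.2 w hw

lemma phi_pth [DecidableEq V] {a b : V} (w : G.Walk a b) : phi η w = phi η (pth hP a b) := by
  induction w with
  | nil => rw [← pth_eq hP Walk.nil Walk.IsPath.nil]
  | @cons a c b h w' ih =>
    by_cases hmem : a ∈ (pth hP c b).support
    · have hpath := pth_isPath hP c b
      have hne : c ≠ a := fun hh => (G.ne_of_adj h) hh.symm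
      have htake : (pth hP c b).takeUntil a hmem = Walk.cons h.symm Walk.nil := by
        have h1 : ((pth hP c b).takeUntil a hmem).IsPath := hpath.takeUntil hmem
        have h2 : (Walk.cons h.symm Walk.nil).IsPath := by simp [hne]
        rw [pth_eq hP _ h1, pth_eq hP _ h2]
      have hdrop : (pth hP c b).dropUntil a hmem = pth hP a b :=
        pth_eq hP _ (hpath.dropUntil hmem)
      have hspec := (pth hP c b).take_spec hmem
      calc phi η (Walk.cons h w') = m η h ≫ phi η w' := rfl
        _ = m η h ≫ phi η (pth hP c b) := by rw [ih]
        _ = m η h ≫ phi η (((pth hP c b).takeUntil a hmem).append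
              ((pth hP c b).dropUntil a hmem)) := by rw [hspec]
        _ = m η h ≫ (phi η ((pth hP c b).takeUntil a hmem) ≫
              phi η ((pth hP c b).dropUntil a hmem)) := by rw [phi_append]
        _ = m η h ≫ (phi η (Walk.cons h.symm Walk.nil) ≫ phi η (pth hP a b)) := by
              rw [htake, hdrop]
        _ = (m η h ≫ m η h.symm) ≫ phi η (pth hP a b) := by simp [phi]
        _ = phi η (pth hP a b) := by rw [m_inv]; simp
    · have hp : (Walk.cons h (pth hP c b)).IsPath := (pth_isPath hP c b).cons hmem
      calc phi η (Walk.cons h w') = m η h ≫ phi η w' := rfl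
        _ = m η h ≫ phi η (pth hP c b) := by rw [ih]
        _ = phi η (Walk.cons h (pth hP c b)) := rfl
        _ = phi η (pth hP a b) := by rw [pth_eq hP _ hp]


variable [DecidableEq V]

noncomputable def chaoticToH : Chaotic V ⥤ H.α where
  obj v := η.fV v
  map {a b} _ := phi η (pth hP a b)
  map_id a := by
    show phi η (pth hP a a) = 𝟙 (η.fV a)
    have h := pth_eq hP (Walk.nil : G.Walk a a) Walk.IsPath.nil
    rw [← h]; rfl
  map_comp {a b c} f g := by
    show phi η (pth hP a c) = phi η (pth hP a b) ≫ phi η (pth hP b c)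
    have h := phi_pth η hP ((pth hP a b).append (pth hP b c))
    exact h.symm.trans (phi_append η _ _)

def g0 : ofSimpleGraph G ⟶ grpdToInv.obj (Grpd.of (Chaotic V)) where
  fV v := v
  fE e := ⟨e.1.1, e.1.2, ⟨⟩⟩
  s_comm _ := rfl
  t_comm _ := rfl
  ι_comm _ := rfl

lemma hom_ext {X Y : InvGraph} {f g : X ⟶ Y} (hV : f.fV = g.fV) (hE : f.fE = g.fE) :
    f = g := by
  change InvGraph.Hom X Y at f g
  cases f; cases g; cases hV; cases hE; rfl

lemma key_fE {a b : V} (h : G.Adj a b) :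
    (⟨η.fV a, η.fV b, phi η (pth hP a b)⟩ : Σ x y : (grpdToInv.obj H).V, x ⟶ y) =
      η.fE ⟨(a,b),h⟩ := by
  calc (⟨η.fV a, η.fV b, phi η (pth hP a b)⟩ : Σ x y : (grpdToInv.obj H).V, x ⟶ y)
      = ⟨η.fV a, η.fV b, phi η (Walk.cons h Walk.nil)⟩ := by
        rw [phi_pth η hP (Walk.cons h Walk.nil)]
    _ = ⟨η.fV a, η.fV b, m η h ≫ 𝟙 _⟩ := rfl
    _ = ⟨η.fV a, η.fV b, m η h⟩ := by rw [Category.comp_id]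
    _ = (show Σ x y : (grpdToInv.obj H).V, x ⟶ y from η.fE ⟨(a,b),h⟩) := by exact sig_eq (η.fE ⟨(a,b),h⟩) (η.s_comm ⟨(a,b),h⟩) (η.t_comm ⟨(a,b),h⟩)

variable (Fr : InvGraph ⥤ Grpd.{0,0}) (adj : Fr ⊣ grpdToInv)

noncomputable def theIso : Fr.obj (ofSimpleGraph G) ≅ Grpd.of (Chaotic V) where
  hom := (adj.homEquiv _ _).symm g0
  inv := chaoticToH (V := V) (adj.unit.app (ofSimpleGraph G)) hP
  hom_inv_id := by
    apply (adj.homEquiv (ofSimpleGraph G) (Fr.obj (ofSimpleGraph G))).injective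
    erw [Adjunction.homEquiv_naturality_right, Equiv.apply_symm_apply,
      Adjunction.homEquiv_unit]
    apply hom_ext
    · rfl
    · funext e
      obtain ⟨⟨a,b⟩,h⟩ := e
      exact key_fE (adj.unit.app (ofSimpleGraph G)) hP h
  inv_hom_id := by
    have hcomm : adj.unit.app (ofSimpleGraph G) ≫
        grpdToInv.map ((adj.homEquiv _ _).symm g0) = g0 := by
      have h2 := (adj.homEquiv (ofSimpleGraph G) (Grpd.of (Chaotic V))).apply_symm_apply g0
      rwa [Adjunction.homEquiv_unit] at h2
    have hobj : ∀ v : Chaotic V,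
        ((adj.homEquiv (ofSimpleGraph G) (Grpd.of (Chaotic V))).symm g0).obj
          ((adj.unit.app (ofSimpleGraph G)).fV v) = v :=
      fun v => congrFun (congrArg InvGraph.Hom.fV hcomm) v
    exact CategoryTheory.Functor.ext hobj (fun _ _ _ => rfl)

end Tree

section Star
variable {U : Type} (u0 : U)

@[reducible]
def star : SimpleGraph U where
  Adj a b := a ≠ b ∧ (a = u0 ∨ b = u0)
  symm := ⟨fun a b ⟨h1, h2⟩ => ⟨h1.symm, h2.symm⟩⟩
  loopless := ⟨fun a h => h.1 rfl⟩

lemma star_nil {c w : U} (p : (star u0).Walk c w) (hc : c ≠ u0)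
    (hu : u0 ∉ p.support) : p.Nil := by
  cases p with
  | nil => exact Walk.Nil.nil
  | cons h p' =>
    rcases h.2 with h2 | h2
    · exact absurd h2 hc
    · exact absurd (by simp [← h2, Walk.start_mem_support]) hu

lemma star_uniq {a b : U} (p q : (star u0).Walk a b) (hp : p.IsPath)
    (hq : q.IsPath) : p = q := by
  induction p with
  | nil => exact ((Walk.isPath_iff_eq_nil (p := q)).mp hq).symm
  | @cons a c b h p' ih =>
    cases q with
    | nil =>
      exact absurd ((Walk.isPath_iff_eq_nil (p := _)).mp hp) (by simp)
    | @cons _ c' _ h2 q' =>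
      rw [Walk.cons_isPath_iff] at hp hq
      have hcc : c = c' := by
        by_cases hau : a = u0
        · have hc : c ≠ u0 := fun hh => h.1 (by rw [hau, hh])
          have hc' : c' ≠ u0 := fun hh => h2.1 (by rw [hau, hh])
          have e1 : c = b := (star_nil u0 p' hc (hau ▸ hp.2)).eq
          have e2 : c' = b := (star_nil u0 q' hc' (hau ▸ hq.2)).eq
          rw [e1, e2]
        · rcases h.2 with h3 | h3
          · exact absurd h3 hau
          · rcases h2.2 with h4 | h4
            · exact absurd h4 hau
            · rw [h3, h4]
      subst hcc
      rw [ih q' hp.1 hq.1]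

lemma star_isTree : (star u0).IsTree := by
  rw [SimpleGraph.isTree_iff_existsUnique_path]
  refine ⟨⟨u0⟩, fun a b => ?_⟩
  have ex : ∃ p : (star u0).Walk a b, p.IsPath := by
    by_cases hab : a = b
    · subst hab; exact ⟨Walk.nil, Walk.IsPath.nil⟩
    by_cases ha : a = u0
    · exact ⟨Walk.cons ⟨hab, Or.inl ha⟩ Walk.nil, by simp [hab]⟩
    by_cases hb : b = u0
    · exact ⟨Walk.cons ⟨hab, Or.inr hb⟩ Walk.nil, by simp [hab]⟩
    · refine ⟨Walk.cons (⟨ha, Or.inr rfl⟩ : (star u0).Adj a u0)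
        (Walk.cons (⟨fun hh => hb hh.symm, Or.inl rfl⟩ : (star u0).Adj u0 b)
          Walk.nil), ?_⟩
      rw [Walk.cons_isPath_iff, Walk.cons_isPath_iff]
      refine ⟨⟨Walk.IsPath.nil, ?_⟩, ?_⟩
      · simp only [Walk.support_nil, List.mem_singleton]
        exact fun hh => hb hh.symm
      · simp only [Walk.support_cons, Walk.support_nil, List.mem_cons,
          List.mem_singleton]
        push_neg
        exact ⟨ha, hab, by simp⟩
  obtain ⟨p, hp⟩ := ex
  exact ⟨p, hp, fun q hq => star_uniq u0 q p hq hp⟩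

end Star

section ChaoticCat

lemma chaotic_hom_subsingleton {X : Grpd.{0,0}} {W : Type}
    (i : X ≅ Grpd.of (Chaotic W)) (a b : X.α) (f g : a ⟶ b) : f = g := by
  have hid : i.hom ⋙ i.inv = 𝟭 X.α := i.hom_inv_id
  have h1 := Functor.congr_hom hid f
  have h2 := Functor.congr_hom hid g
  have h3 : (i.hom ⋙ i.inv).map f = (i.hom ⋙ i.inv).map g := rfl
  rw [h1, h2] at h3
  rwa [CategoryTheory.Functor.id_map, CategoryTheory.Functor.id_map,
    cancel_epi, cancel_mono] at h3

lemma chaotic_hom_nonempty {X : Grpd.{0,0}} {W : Type}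
    (i : X ≅ Grpd.of (Chaotic W)) (a b : X.α) : Nonempty (a ⟶ b) :=
  ⟨eqToHom (Functor.congr_obj i.hom_inv_id a).symm ≫
    i.inv.map (PUnit.unit : i.hom.obj a ⟶ i.hom.obj b) ≫
    eqToHom (Functor.congr_obj i.hom_inv_id b)⟩

/-- A groupoid with all hom types inhabited subsingletons is chaotic. -/
noncomputable def toChaoticIso (X : Grpd.{0,0})
    (hne : ∀ a b : X.α, Nonempty (a ⟶ b))
    (hss : ∀ (a b : X.α) (f g : a ⟶ b), f = g) :
    X ≅ Grpd.of (Chaotic X.α) where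
  hom := ({ obj := fun a => a, map := fun _ => PUnit.unit,
            map_id := fun _ => rfl, map_comp := fun _ _ => rfl } :
            X.α ⥤ Chaotic X.α)
  inv := ({ obj := fun a => a, map := fun {a b} _ => (hne a b).some,
            map_id := fun a => hss _ _ _ _,
            map_comp := fun _ _ => hss _ _ _ _ } : Chaotic X.α ⥤ X.α)
  hom_inv_id := CategoryTheory.Functor.ext (fun _ => rfl) (fun a b f => hss _ _ _ _)
  inv_hom_id := CategoryTheory.Functor.ext (fun _ => rfl) (fun _ _ _ => rfl)

end ChaoticCat

section Equiv
variable (Fr : InvGraph ⥤ Grpd.{0,0})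

/-- the subcategory predicate -/
def P : Grpd.{0,0} → Prop := fun X =>
  ∃ (V : Type) (_ : Fintype V) (G : SimpleGraph V), G.IsTree ∧
    Nonempty (X ≅ Fr.obj (ofSimpleGraph G))

lemma P_props (adj : Fr ⊣ grpdToInv) {X : Grpd.{0,0}} (hX : P Fr X) :
    Nonempty (Fintype X.α) ∧ Nonempty X.α ∧
      (∀ a b : X.α, Nonempty (a ⟶ b)) ∧
      (∀ (a b : X.α) (f g : a ⟶ b), f = g) := by
  obtain ⟨V, hF, G, hT, ⟨i⟩⟩ := hX
  letI : DecidableEq V := Classical.decEq V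
  have hP := hT.existsUnique_path
  let j : X ≅ Grpd.of (Chaotic V) := i ≪≫ theIso hP Fr adj
  let eqv : X.α ≃ V :=
    ⟨j.hom.obj, j.inv.obj,
      fun a => Functor.congr_obj j.hom_inv_id a,
      fun b => Functor.congr_obj j.inv_hom_id b⟩
  exact ⟨⟨Fintype.ofEquiv V eqv.symm⟩,
    ⟨eqv.symm (Classical.choice hT.isConnected.nonempty)⟩,
    chaotic_hom_nonempty j, chaotic_hom_subsingleton j⟩

/-- forward functor -/
noncomputable def Phi (adj : Fr ⊣ grpdToInv) : ObjectProperty.FullSubcategory (P Fr) ⥤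
    ObjectProperty.FullSubcategory (fun S : FintypeCat.{0} => Nonempty S) where
  obj X := ⟨@FintypeCat.of X.obj.α
      (@Finite.of_fintype _ (Classical.choice (P_props Fr adj X.property).1)),
    (P_props Fr adj X.property).2.1⟩
  map {X Y} F := ObjectProperty.homMk (FintypeCat.homMk F.hom.obj)
  map_id _ := rfl
  map_comp _ _ := rfl

/-- functor between chaotic groupoids from a function -/
def chaoticFunctor {A B : Type} (f : A → B) : Chaotic A ⥤ Chaotic B where
  obj a := f a
  map _ := PUnit.unit
  map_id _ := rfl
  map_comp _ _ := rfl

/-- backward functor -/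
noncomputable def Psi (adj : Fr ⊣ grpdToInv) : ObjectProperty.FullSubcategory (fun S : FintypeCat.{0} => Nonempty S) ⥤
    ObjectProperty.FullSubcategory (P Fr) where
  obj S := ⟨Grpd.of (Chaotic S.obj), by
    letI : DecidableEq (↑S.obj : Type) := Classical.decEq _
    exact ⟨S.obj, Fintype.ofFinite _, star (Classical.choice S.property),
      star_isTree _,
      ⟨(theIso ((star_isTree (Classical.choice S.property)).existsUnique_path)
          Fr adj).symm⟩⟩⟩
  map {S T} f := ObjectProperty.homMk (chaoticFunctor f.hom)
  map_id _ := rfl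
  map_comp _ _ := rfl

/-- the equivalence -/
noncomputable def theEquiv (adj : Fr ⊣ grpdToInv) : ObjectProperty.FullSubcategory (P Fr) ≌
    ObjectProperty.FullSubcategory (fun S : FintypeCat.{0} => Nonempty S) :=
  CategoryTheory.Equivalence.mk (Phi Fr adj) (Psi Fr adj)
    (NatIso.ofComponents
      (fun X =>
        let h := P_props Fr adj X.property
        let i := toChaoticIso X.obj h.2.2.1 h.2.2.2
        ObjectProperty.isoMk _ i)
      (fun {X Y} f => ObjectProperty.hom_ext _ (CategoryTheory.Functor.ext (fun _ => rfl) (fun _ _ _ => rfl))))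
    (NatIso.ofComponents
      (fun S => CategoryTheory.Iso.refl _)
      (fun {S T} f => rfl))

end Equiv
end FreeTree

/-- the free groupoid on a finite connected acyclic graph is the
chaotic groupoid on its vertices (between any two vertices there is exactly one
reduced path), and hence the full subcategory of groupoids spanned by the free
groupoids on finite connected acyclic graphs is equivalent to the category
`Δ_sym` of nonempty finite sets and all functions. -/
theorem free_groupoid_on_tree_chaotic
    (Fr : InvGraph ⥤ Grpd.{0,0}) (adj : Fr ⊣ grpdToInv) :
    (∀ (V : Type) [Fintype V] (G : SimpleGraph V), G.IsTree →
      (∀ a b : V, ∃! p : G.Walk a b, p.IsPath) ∧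
      Nonempty (Fr.obj (ofSimpleGraph G) ≅ Grpd.of (Chaotic V))) ∧
    Nonempty (
      ObjectProperty.FullSubcategory (fun X : Grpd.{0,0} =>
        ∃ (V : Type) (_ : Fintype V) (G : SimpleGraph V), G.IsTree ∧
          Nonempty (X ≅ Fr.obj (ofSimpleGraph G))) ≌
      ObjectProperty.FullSubcategory (fun S : FintypeCat.{0} => Nonempty S)) := by
  constructor
  · intro V _ G hT
    have hP := hT.existsUnique_path
    refine ⟨hP, ?_⟩
    letI := Classical.decEq V
    exact ⟨FreeTree.theIso hP Fr adj⟩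
  · exact ⟨FreeTree.theEquiv Fr adj⟩
end
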